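/- Let N ≥ 2. There exists a constant C, depending only on N, such that for every Lebesgue-measurable set E ⊂ ℝ^N one has |E|^{(N-1)/N} ≤ C · Cap(E), where |E| denotes the Lebesgue measure of E. -/

import Mathlib

open MeasureTheory Metric Filter
open scoped ENNReal Topology NNReal

/-- The capacity (in the de la Vallée Poussin sense) associated with the kernel
`|x|^{-(N-1)}`: for compact `E`, the sup of `ν E` over positive measures `ν`
supported in `E` whose potential is everywhere at most `1`; for arbitrary sets,
the sup over compact subsets. -/
noncomputable def rieszCap (N : ℕ) (A : Set (EuclideanSpace ℝ (Fin N))) : ℝ≥0∞ :=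
  ⨆ (E : Set (EuclideanSpace ℝ (Fin N))) (_ : IsCompact E) (_ : E ⊆ A)
    (ν : Measure (EuclideanSpace ℝ (Fin N))) (_ : ν Eᶜ = 0)
    (_ : ∀ x : EuclideanSpace ℝ (Fin N),
      (∫⁻ y, (‖x - y‖₊ : ℝ≥0∞) ^ (-(N - 1 : ℝ)) ∂ν) ≤ 1), ν E

namespace RieszCapAux

/-- Pointwise bound for the kernel away from the singularity. -/
lemma kernel_le {N : ℕ} (hN : 2 ≤ N) {x y : EuclideanSpace ℝ (Fin N)} {s : ℝ}
    (hs : 0 < s) (h : s ≤ ‖x - y‖) :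
    (‖x - y‖₊ : ℝ≥0∞) ^ (-(N - 1 : ℝ)) ≤ ENNReal.ofReal (s ^ (-(N - 1 : ℝ))) := by
  have he : (0:ℝ) ≤ (N:ℝ) - 1 := by
    have : (2:ℝ) ≤ (N:ℝ) := by exact_mod_cast hN
    linarith
  rw [ENNReal.rpow_neg, Real.rpow_neg hs.le,
    ENNReal.ofReal_inv_of_pos (Real.rpow_pos_of_pos hs _)]
  refine ENNReal.inv_le_inv.2 ?_
  calc ENNReal.ofReal (s ^ ((N:ℝ) - 1))
      ≤ ENNReal.ofReal (‖x - y‖ ^ ((N:ℝ) - 1)) :=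
        ENNReal.ofReal_le_ofReal (Real.rpow_le_rpow hs.le h he)
    _ = (‖x - y‖₊ : ℝ≥0∞) ^ ((N:ℝ) - 1) := by
        rw [← enorm_eq_nnnorm, ← ofReal_norm, ENNReal.ofReal_rpow_of_pos (hs.trans_le h)]

/-- The key estimate near the singularity: the integral of the kernel on a ball of radius `r`
is at most `C(N) r`. -/
lemma near {N : ℕ} (hN : 2 ≤ N) (x : EuclideanSpace ℝ (Fin N)) {r : ℝ} (hr : 0 < r) :
    ∫⁻ y in ball x r, (‖x - y‖₊ : ℝ≥0∞) ^ (-(N - 1 : ℝ)) ∂volume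
      ≤ volume (ball (0 : EuclideanSpace ℝ (Fin N)) 1) * ENNReal.ofReal (2 ^ N * r) := by
  haveI : Nonempty (Fin N) := ⟨⟨0, by omega⟩⟩
  set ω := volume (ball (0 : EuclideanSpace ℝ (Fin N)) 1) with hω
  set s : ℕ → ℝ := fun j => r / 2 ^ j with hsdef
  have hspos : ∀ j, 0 < s j := fun j => div_pos hr (by positivity)
  set A : ℕ → Set (EuclideanSpace ℝ (Fin N)) := fun j => ball x (s j) \ ball x (s (j+1)) with hA
  -- covering
  have hcover : ball x r \ {x} ⊆ ⋃ j, A j := by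
    rintro y ⟨hyr, hyx⟩
    have hd : 0 < dist y x := dist_pos.2 (by simpa using hyx)
    have hex : ∃ j, s (j + 1) ≤ dist y x := by
      obtain ⟨n, hn⟩ := pow_unbounded_of_one_lt (r / dist y x) (one_lt_two (α := ℝ))
      refine ⟨n, ?_⟩
      have : r / 2 ^ (n+1) ≤ r / 2 ^ n := by
        apply div_le_div_of_nonneg_left hr.le (by positivity)
        exact pow_le_pow_right₀ one_le_two (Nat.le_succ n)
      refine this.trans ?_
      rw [div_le_iff₀ (by positivity)]
      rw [div_lt_iff₀ hd] at hn
      nlinarith [hd]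
    set j0 := Nat.find hex with hj0
    have hle : s (j0 + 1) ≤ dist y x := Nat.find_spec hex
    have hlt : dist y x < s j0 := by
      rcases Nat.eq_zero_or_pos j0 with h0 | h0
      · rw [h0]; simpa [hsdef] using (mem_ball.1 hyr)
      · have := Nat.find_min hex (m := j0 - 1) (by omega)
        push_neg at this
        have : dist y x < s (j0 - 1 + 1) := this
        rwa [Nat.sub_add_cancel h0] at this
    exact Set.mem_iUnion.2 ⟨j0, ⟨mem_ball.2 hlt, fun hmem => absurd (mem_ball.1 hmem) (not_lt.2 hle)⟩⟩
  -- term bound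
  have hterm : ∀ j, ∫⁻ y in A j, (‖x - y‖₊ : ℝ≥0∞) ^ (-(N - 1 : ℝ)) ∂volume
      ≤ (ENNReal.ofReal (2 ^ ((N:ℝ) - 1) * r) * ω) * (2⁻¹ : ℝ≥0∞) ^ j := by
    intro j
    have hker : ∀ y ∈ A j, (‖x - y‖₊ : ℝ≥0∞) ^ (-(N - 1 : ℝ))
        ≤ ENNReal.ofReal ((s (j+1)) ^ (-(N - 1 : ℝ))) := by
      intro y hy
      refine kernel_le hN (hspos (j+1)) ?_
      have : ¬ dist y x < s (j+1) := fun h => hy.2 (mem_ball.2 h)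
      rw [← not_lt]
      rwa [dist_comm, dist_eq_norm] at this
    calc ∫⁻ y in A j, (‖x - y‖₊ : ℝ≥0∞) ^ (-(N - 1 : ℝ)) ∂volume
        ≤ ∫⁻ _ in A j, ENNReal.ofReal ((s (j+1)) ^ (-(N - 1 : ℝ))) ∂volume :=
          setLIntegral_mono measurable_const hker
      _ = ENNReal.ofReal ((s (j+1)) ^ (-(N - 1 : ℝ))) * volume (A j) := setLIntegral_const _ _
      _ ≤ ENNReal.ofReal ((s (j+1)) ^ (-(N - 1 : ℝ))) * volume (ball x (s j)) :=
          mul_le_mul_right (measure_mono Set.diff_subset) _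
      _ = ENNReal.ofReal ((s (j+1)) ^ (-(N - 1 : ℝ))) * (ENNReal.ofReal (s j ^ N) * ω) := by
          rw [Measure.addHaar_ball volume x (hspos j).le, finrank_euclideanSpace_fin]
      _ = (ENNReal.ofReal (2 ^ ((N:ℝ) - 1) * r) * ω) * (2⁻¹ : ℝ≥0∞) ^ j := by
          rw [← mul_assoc, ← ENNReal.ofReal_mul (Real.rpow_nonneg (hspos (j+1)).le _)]
          have hreal : (s (j+1)) ^ (-(N - 1 : ℝ)) * (s j) ^ N
              = (2 ^ ((N:ℝ) - 1) * r) * (2⁻¹ : ℝ) ^ j := by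
            have ha : 0 < s j := hspos j
            have hj1 : s (j+1) = s j * 2⁻¹ := by
              simp only [hsdef]; rw [pow_succ]; ring
            rw [hj1, ← Real.rpow_natCast (s j) N,
              Real.mul_rpow ha.le (by norm_num : (0:ℝ) ≤ 2⁻¹),
              Real.inv_rpow (by norm_num : (0:ℝ) ≤ 2), Real.rpow_neg (by norm_num : (0:ℝ) ≤ 2),
              inv_inv]
            rw [mul_comm ((s j) ^ (-((N:ℝ) - 1))) _, mul_assoc,
              ← Real.rpow_add ha]
            have hexp : -((N:ℝ) - 1) + (N:ℝ) = 1 := by ring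
            rw [hexp, Real.rpow_one]
            have hsj : s j = r * (2⁻¹:ℝ) ^ j := by
              simp only [hsdef]; rw [div_eq_mul_inv, inv_pow]
            rw [hsj]; ring
          have h2 : ENNReal.ofReal ((2:ℝ)⁻¹) = (2⁻¹ : ℝ≥0∞) := by
            rw [ENNReal.ofReal_inv_of_pos (by norm_num : (0:ℝ) < 2)]; norm_num
          rw [hreal, ENNReal.ofReal_mul (by positivity),
            ENNReal.ofReal_pow (by norm_num : (0:ℝ) ≤ 2⁻¹), h2]
          ring
  -- put it together
  have h0 : volume ({x} : Set (EuclideanSpace ℝ (Fin N))) = 0 := measure_singleton _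
  have hae : (ball x r \ {x} : Set (EuclideanSpace ℝ (Fin N))) =ᵐ[volume] ball x r :=
    diff_ae_eq_self.2 (measure_mono_null Set.inter_subset_right h0)
  calc ∫⁻ y in ball x r, (‖x - y‖₊ : ℝ≥0∞) ^ (-(N - 1 : ℝ)) ∂volume
      = ∫⁻ y in ball x r \ {x}, (‖x - y‖₊ : ℝ≥0∞) ^ (-(N - 1 : ℝ)) ∂volume :=
        (setLIntegral_congr hae).symm
    _ ≤ ∫⁻ y in ⋃ j, A j, (‖x - y‖₊ : ℝ≥0∞) ^ (-(N - 1 : ℝ)) ∂volume :=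
        lintegral_mono_set hcover
    _ ≤ ∑' j, ∫⁻ y in A j, (‖x - y‖₊ : ℝ≥0∞) ^ (-(N - 1 : ℝ)) ∂volume :=
        lintegral_iUnion_le _ _
    _ ≤ ∑' j, (ENNReal.ofReal (2 ^ ((N:ℝ) - 1) * r) * ω) * (2⁻¹ : ℝ≥0∞) ^ j :=
        ENNReal.tsum_le_tsum hterm
    _ = (ENNReal.ofReal (2 ^ ((N:ℝ) - 1) * r) * ω) * 2 := by
        rw [ENNReal.tsum_mul_left, ENNReal.tsum_geometric, ENNReal.one_sub_inv_two, inv_inv]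
    _ = ω * ENNReal.ofReal (2 ^ N * r) := by
        rw [mul_comm _ ω, mul_assoc]
        congr 1
        rw [show (2 : ℝ≥0∞) = ENNReal.ofReal 2 by norm_num,
          ← ENNReal.ofReal_mul (by positivity)]
        congr 1
        rw [← Real.rpow_natCast (2:ℝ) N]
        rw [show ((N:ℝ)) = 1 + ((N:ℝ) - 1) by ring, Real.rpow_add (by norm_num : (0:ℝ) < 2),
          Real.rpow_one]
        ring

/-- The potential of the restriction of Lebesgue measure to a set of finite positive
measure is bounded by `C(N) |K|^{1/N}`. -/
lemma potential_le {N : ℕ} (hN : 2 ≤ N) {K : Set (EuclideanSpace ℝ (Fin N))}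
    (hfin : volume K ≠ ∞) (hpos : volume K ≠ 0) (x : EuclideanSpace ℝ (Fin N)) :
    ∫⁻ y in K, (‖x - y‖₊ : ℝ≥0∞) ^ (-(N - 1 : ℝ)) ∂volume
      ≤ (volume (ball (0 : EuclideanSpace ℝ (Fin N)) 1) * ENNReal.ofReal ((2:ℝ) ^ N) + 1)
          * ENNReal.ofReal ((volume K).toReal ^ ((1:ℝ)/N)) := by
  haveI : Nonempty (Fin N) := ⟨⟨0, by omega⟩⟩
  set ω := volume (ball (0 : EuclideanSpace ℝ (Fin N)) 1) with hω
  set t := (volume K).toReal with ht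
  have htpos : 0 < t := ENNReal.toReal_pos hpos hfin
  set r := t ^ ((1:ℝ)/N) with hrdef
  have hrpos : 0 < r := Real.rpow_pos_of_pos htpos _
  have hNne : (N:ℝ) ≠ 0 := by positivity
  -- far part
  have hfar : ∫⁻ y in K \ ball x r, (‖x - y‖₊ : ℝ≥0∞) ^ (-(N - 1 : ℝ)) ∂volume
      ≤ ENNReal.ofReal r := by
    have hker : ∀ y ∈ K \ ball x r, (‖x - y‖₊ : ℝ≥0∞) ^ (-(N - 1 : ℝ))
        ≤ ENNReal.ofReal (r ^ (-(N - 1 : ℝ))) := by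
      intro y hy
      refine kernel_le hN hrpos ?_
      have : ¬ dist y x < r := fun h => hy.2 (mem_ball.2 h)
      rw [← not_lt]
      rwa [dist_comm, dist_eq_norm] at this
    calc ∫⁻ y in K \ ball x r, (‖x - y‖₊ : ℝ≥0∞) ^ (-(N - 1 : ℝ)) ∂volume
        ≤ ∫⁻ _ in K \ ball x r, ENNReal.ofReal (r ^ (-(N - 1 : ℝ))) ∂volume :=
          setLIntegral_mono measurable_const hker
      _ = ENNReal.ofReal (r ^ (-(N - 1 : ℝ))) * volume (K \ ball x r) := setLIntegral_const _ _
      _ ≤ ENNReal.ofReal (r ^ (-(N - 1 : ℝ))) * volume K :=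
          mul_le_mul_right (measure_mono Set.diff_subset) _
      _ = ENNReal.ofReal r := by
          rw [show volume K = ENNReal.ofReal t by rw [ht, ENNReal.ofReal_toReal hfin],
            ← ENNReal.ofReal_mul (Real.rpow_nonneg hrpos.le _)]
          congr 1
          rw [hrdef]
          calc (t ^ ((1:ℝ)/N)) ^ (-((N:ℝ) - 1)) * t
              = t ^ ((1:ℝ)/N * -((N:ℝ) - 1)) * t ^ (1:ℝ) := by
                rw [← Real.rpow_mul htpos.le, Real.rpow_one]
            _ = t ^ ((1:ℝ)/N * -((N:ℝ) - 1) + 1) := (Real.rpow_add htpos _ _).symm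
            _ = t ^ ((1:ℝ)/N) := by
                congr 1
                field_simp
                ring
  -- combine
  calc ∫⁻ y in K, (‖x - y‖₊ : ℝ≥0∞) ^ (-(N - 1 : ℝ)) ∂volume
      ≤ ∫⁻ y in ball x r ∪ (K \ ball x r), (‖x - y‖₊ : ℝ≥0∞) ^ (-(N - 1 : ℝ)) ∂volume := by
        apply lintegral_mono_set
        intro y hy
        by_cases h : y ∈ ball x r
        · exact Set.mem_union_left _ h
        · exact Set.mem_union_right _ ⟨hy, h⟩
    _ ≤ (∫⁻ y in ball x r, (‖x - y‖₊ : ℝ≥0∞) ^ (-(N - 1 : ℝ)) ∂volume)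
          + ∫⁻ y in K \ ball x r, (‖x - y‖₊ : ℝ≥0∞) ^ (-(N - 1 : ℝ)) ∂volume :=
        lintegral_union_le _ _ _
    _ ≤ ω * ENNReal.ofReal (2 ^ N * r) + ENNReal.ofReal r :=
        add_le_add (near hN x hrpos) hfar
    _ = (ω * ENNReal.ofReal ((2:ℝ) ^ N) + 1) * ENNReal.ofReal r := by
        rw [ENNReal.ofReal_mul (by positivity : (0:ℝ) ≤ 2 ^ N), add_mul, one_mul, mul_assoc]
    _ = (ω * ENNReal.ofReal ((2:ℝ) ^ N) + 1) * ENNReal.ofReal ((volume K).toReal ^ ((1:ℝ)/N)) :=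
        rfl

/-- Lower bound on the capacity via compact subsets. -/
lemma cap_lower {N : ℕ} (hN : 2 ≤ N) {A K : Set (EuclideanSpace ℝ (Fin N))}
    (hK : IsCompact K) (hKA : K ⊆ A) :
    volume K ^ (((N:ℝ) - 1) / N)
      ≤ (volume (ball (0 : EuclideanSpace ℝ (Fin N)) 1) * ENNReal.ofReal ((2:ℝ) ^ N) + 1)
          * rieszCap N A := by
  haveI : Nonempty (Fin N) := ⟨⟨0, by omega⟩⟩
  set ω := volume (ball (0 : EuclideanSpace ℝ (Fin N)) 1) with hω
  set c : ℝ≥0∞ := ω * ENNReal.ofReal ((2:ℝ) ^ N) + 1 with hc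
  have hc0 : c ≠ 0 := by simp [hc]
  have hcT : c ≠ ∞ := by
    refine ENNReal.add_ne_top.2 ⟨ENNReal.mul_ne_top measure_ball_lt_top.ne ENNReal.ofReal_ne_top,
      ENNReal.one_ne_top⟩
  have hm : volume K ≠ ∞ := hK.measure_lt_top.ne
  have hepos : (0:ℝ) < ((N:ℝ) - 1) / N := by
    have : (2:ℝ) ≤ (N:ℝ) := by exact_mod_cast hN
    have hN0 : (0:ℝ) < (N:ℝ) := by linarith
    apply div_pos (by linarith) hN0
  rcases eq_or_ne (volume K) 0 with h0 | h0
  · rw [h0, ENNReal.zero_rpow_of_pos hepos]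
    exact zero_le
  set t := (volume K).toReal with ht
  have htpos : 0 < t := ENNReal.toReal_pos h0 hm
  set r := t ^ ((1:ℝ)/N) with hrdef
  have hrpos : 0 < r := Real.rpow_pos_of_pos htpos _
  set d : ℝ≥0∞ := c * ENNReal.ofReal r with hd
  have hd0 : d ≠ 0 := by
    simp only [hd, mul_ne_zero_iff]
    exact ⟨hc0, by simpa using hrpos⟩
  have hdT : d ≠ ∞ := ENNReal.mul_ne_top hcT ENNReal.ofReal_ne_top
  set ν : Measure (EuclideanSpace ℝ (Fin N)) := d⁻¹ • volume.restrict K with hν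
  have hKmeas : MeasurableSet K := hK.isClosed.measurableSet
  have h1 : ν Kᶜ = 0 := by
    rw [hν, Measure.smul_apply, Measure.restrict_apply hKmeas.compl, smul_eq_mul]
    simp
  have h2 : ∀ x : EuclideanSpace ℝ (Fin N),
      (∫⁻ y, (‖x - y‖₊ : ℝ≥0∞) ^ (-(N - 1 : ℝ)) ∂ν) ≤ 1 := by
    intro x
    rw [hν, lintegral_smul_measure]
    calc d⁻¹ * ∫⁻ y in K, (‖x - y‖₊ : ℝ≥0∞) ^ (-(N - 1 : ℝ)) ∂volume
        ≤ d⁻¹ * d := mul_le_mul_right (potential_le hN hm h0 x) _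
      _ = 1 := ENNReal.inv_mul_cancel hd0 hdT
  have h3 : ν K ≤ rieszCap N A := by
    refine le_iSup_of_le K (le_iSup_of_le hK (le_iSup_of_le hKA
      (le_iSup_of_le ν (le_iSup_of_le h1 (le_iSup_of_le h2 le_rfl)))))
  have hνK : ν K = d⁻¹ * volume K := by
    rw [hν, Measure.smul_apply, Measure.restrict_apply_self, smul_eq_mul]
  have hNne : (N:ℝ) ≠ 0 := by positivity
  have hfinal : c * ν K = volume K ^ (((N:ℝ) - 1) / N) := by
    rw [hνK]
    calc c * (d⁻¹ * volume K)
        = (c * volume K) / (c * ENNReal.ofReal r) := by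
          rw [ENNReal.div_eq_inv_mul, hd]; ring
      _ = volume K / ENNReal.ofReal r := ENNReal.mul_div_mul_left _ _ hc0 hcT
      _ = ENNReal.ofReal (t / r) := by
          rw [show volume K = ENNReal.ofReal t from (ENNReal.ofReal_toReal hm).symm,
            ENNReal.ofReal_div_of_pos hrpos]
      _ = ENNReal.ofReal (t ^ (((N:ℝ) - 1) / N)) := by
          congr 1
          rw [hrdef, show ((N:ℝ) - 1) / N = 1 - 1/(N:ℝ) by field_simp,
            Real.rpow_sub htpos, Real.rpow_one]
      _ = volume K ^ (((N:ℝ) - 1) / N) := by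
          rw [← ENNReal.ofReal_rpow_of_pos htpos, ENNReal.ofReal_toReal hm]
  calc volume K ^ (((N:ℝ) - 1) / N) = c * ν K := hfinal.symm
    _ ≤ c * rieszCap N A := mul_le_mul_right h3 _

end RieszCapAux

theorem lebesgue_measure_le_capacity
    (N : ℕ) (hN : 2 ≤ N) :
    ∃ C : ℝ, 0 < C ∧ ∀ E : Set (EuclideanSpace ℝ (Fin N)), MeasurableSet E →
      (volume E) ^ ((N - 1 : ℝ) / N) ≤ ENNReal.ofReal C * rieszCap N E := by
  haveI : Nonempty (Fin N) := ⟨⟨0, by omega⟩⟩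
  set ω := volume (ball (0 : EuclideanSpace ℝ (Fin N)) 1) with hω
  refine ⟨ω.toReal * 2 ^ N + 1, by positivity, ?_⟩
  intro E hE
  have hofReal : ENNReal.ofReal (ω.toReal * 2 ^ N + 1)
      = ω * ENNReal.ofReal ((2:ℝ) ^ N) + 1 := by
    rw [ENNReal.ofReal_add (by positivity) zero_le_one, ENNReal.ofReal_one,
      ENNReal.ofReal_mul ENNReal.toReal_nonneg, ENNReal.ofReal_toReal measure_ball_lt_top.ne]
  rw [hofReal]
  set c : ℝ≥0∞ := ω * ENNReal.ofReal ((2:ℝ) ^ N) + 1 with hc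
  set R := c * rieszCap N E with hR
  set e : ℝ := ((N:ℝ) - 1) / N with he
  have hepos : (0:ℝ) < e := by
    have : (2:ℝ) ≤ (N:ℝ) := by exact_mod_cast hN
    exact div_pos (by linarith) (by linarith)
  have key : ∀ a : ℝ≥0∞, a < volume E → a ≤ R ^ e⁻¹ := by
    intro a ha
    obtain ⟨K, hKE, hKc, hK⟩ := hE.exists_lt_isCompact ha
    have h1 : a ^ e ≤ R := le_trans (ENNReal.rpow_le_rpow hK.le hepos.le)
      (RieszCapAux.cap_lower hN hKc hKE)
    calc a = (a ^ e) ^ e⁻¹ := by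
          rw [← ENNReal.rpow_mul, mul_inv_cancel₀ hepos.ne', ENNReal.rpow_one]
      _ ≤ R ^ e⁻¹ := ENNReal.rpow_le_rpow h1 (by positivity)
  have hle : volume E ≤ R ^ e⁻¹ := by
    rcases le_or_gt (volume E) (R ^ e⁻¹) with h | h
    · exact h
    · obtain ⟨a, ha1, ha2⟩ := exists_between h
      exact absurd (key a ha2) (not_le.2 ha1)
  calc volume E ^ e ≤ (R ^ e⁻¹) ^ e := ENNReal.rpow_le_rpow hle hepos.le
    _ = R := by rw [← ENNReal.rpow_mul, inv_mul_cancel₀ hepos.ne', ENNReal.rpow_one]
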